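/- Suppose μ : (paths in SL(2,ℝ) starting at I with nondegenerate endpoint) → ℤ satisfies: homotopy invariance through nondegenerate paths; the Maslov compatibility μ(LΦ) − μ(Φ) = 2·maslov(L) for closed loops L; invertibility μ(Φ⁻¹) = −μ(Φ); and normalization μ(t ↦ rotation by πt, t∈[0,1]) = 1. Then for a path Φ whose endpoint Φ(T) has two real positive eigenvalues λ ≠ 1 and 1/λ, μ(Φ) is even. -/

import Mathlib

open Matrix

namespace CZAux

noncomputable def Rot (α : ℝ) : Matrix (Fin 2) (Fin 2) ℝ :=
  !![Real.cos α, -Real.sin α; Real.sin α, Real.cos α]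

lemma Rot_mul_neg (α : ℝ) : Rot α * Rot (-α) = 1 := by
  ext i j
  fin_cases i <;> fin_cases j <;>
    simp [Rot, Matrix.mul_apply, Fin.sum_univ_two, Matrix.one_apply] <;>
    nlinarith [Real.sin_sq_add_cos_sq α]

lemma Rot_zero : Rot 0 = 1 := by
  simp [Rot, Matrix.one_fin_two]

lemma Rot_det (α : ℝ) : (Rot α).det = 1 := by
  simp [Rot, Matrix.det_fin_two_of]
  nlinarith [Real.sin_sq_add_cos_sq α]

lemma Rot_continuous : Continuous Rot := by
  apply continuous_matrix
  intro i j
  fin_cases i <;> fin_cases j <;> simp [Rot] <;> continuity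

lemma conj_sub_one_det (R S M : Matrix (Fin 2) (Fin 2) ℝ) (h : R * S = 1) :
    (R * M * S - 1).det = (M - 1).det := by
  have h2 : R * M * S - 1 = R * (M - 1) * S := by
    rw [Matrix.mul_sub, Matrix.mul_one, Matrix.sub_mul, h]
  have hdet : R.det * S.det = 1 := by
    rw [← Matrix.det_mul, h, Matrix.det_one]
  rw [h2, Matrix.det_mul, Matrix.det_mul]
  linear_combination (M - 1).det * hdet

noncomputable def psi0 (lam T t : ℝ) : Matrix (Fin 2) (Fin 2) ℝ :=
  !![lam ^ (t/T), (0:ℝ); 0, lam ^ (-(t/T))]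

noncomputable def psi0' (lam T t : ℝ) : Matrix (Fin 2) (Fin 2) ℝ :=
  !![lam ^ (-(t/T)), (0:ℝ); 0, lam ^ (t/T)]

variable {lam T : ℝ}

lemma rpow_mul_rpow_neg (hlam : 0 < lam) (x : ℝ) : lam ^ x * lam ^ (-x) = 1 := by
  rw [← Real.rpow_add hlam]; simp

lemma rpow_neg_mul_rpow (hlam : 0 < lam) (x : ℝ) : lam ^ (-x) * lam ^ x = 1 := by
  rw [← Real.rpow_add hlam]; simp

lemma psi0_zero : psi0 lam T 0 = 1 := by
  simp [psi0, Matrix.one_fin_two]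

lemma psi0'_zero : psi0' lam T 0 = 1 := by
  simp [psi0', Matrix.one_fin_two]

lemma psi0_det (hlam : 0 < lam) (t : ℝ) : (psi0 lam T t).det = 1 := by
  simp [psi0, Matrix.det_fin_two_of, rpow_mul_rpow_neg hlam]

lemma psi0'_det (hlam : 0 < lam) (t : ℝ) : (psi0' lam T t).det = 1 := by
  simp [psi0', Matrix.det_fin_two_of]
  rw [mul_comm]
  exact rpow_mul_rpow_neg hlam _

lemma psi0_mul_psi0' (hlam : 0 < lam) (t : ℝ) : psi0 lam T t * psi0' lam T t = 1 := by
  simp [psi0, psi0', Matrix.mul_fin_two, Matrix.one_fin_two, rpow_mul_rpow_neg hlam,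
    rpow_neg_mul_rpow hlam]

lemma psi0'_mul_psi0 (hlam : 0 < lam) (t : ℝ) : psi0' lam T t * psi0 lam T t = 1 := by
  simp [psi0, psi0', Matrix.mul_fin_two, Matrix.one_fin_two, rpow_mul_rpow_neg hlam,
    rpow_neg_mul_rpow hlam]

lemma psi0_inv (hlam : 0 < lam) (t : ℝ) : (psi0 lam T t)⁻¹ = psi0' lam T t :=
  Matrix.inv_eq_right_inv (psi0_mul_psi0' hlam t)

lemma psi0_T (hlam : 0 < lam) (hT : T ≠ 0) : psi0 lam T T = !![lam, 0; 0, lam⁻¹] := by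
  rw [psi0, div_self hT, Real.rpow_one, Real.rpow_neg_one]

lemma psi0'_T (hlam : 0 < lam) (hT : T ≠ 0) : psi0' lam T T = !![lam⁻¹, 0; 0, lam] := by
  rw [psi0', div_self hT, Real.rpow_one, Real.rpow_neg_one]

lemma rpow_cont (hlam : 0 < lam) {g : ℝ → ℝ} (hg : Continuous g) :
    Continuous fun t => lam ^ (g t) := by
  have : (fun t => lam ^ (g t)) = fun t => Real.exp (Real.log lam * g t) := by
    funext t; rw [Real.rpow_def_of_pos hlam]
  rw [this]
  exact Real.continuous_exp.comp (continuous_const.mul hg)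

lemma psi0_cont (hlam : 0 < lam) : Continuous (psi0 lam T) := by
  apply continuous_matrix
  intro i j
  fin_cases i <;> fin_cases j <;> simp [psi0] <;>
    first
      | exact continuous_const
      | exact rpow_cont hlam (continuous_id.div_const T)
      | exact rpow_cont hlam (continuous_id.div_const T).neg

lemma psi0'_cont (hlam : 0 < lam) : Continuous (psi0' lam T) := by
  apply continuous_matrix
  intro i j
  fin_cases i <;> fin_cases j <;> simp [psi0'] <;>
    first
      | exact continuous_const
      | exact rpow_cont hlam (continuous_id.div_const T)
      | exact rpow_cont hlam (continuous_id.div_const T).neg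

lemma D_sub_det (hlam1 : lam ≠ 1) (hlaminv1 : lam⁻¹ ≠ 1) :
    ((!![lam, 0; 0, lam⁻¹] : Matrix (Fin 2) (Fin 2) ℝ) - 1).det ≠ 0 := by
  have : ((!![lam, 0; 0, lam⁻¹] : Matrix (Fin 2) (Fin 2) ℝ) - 1).det
      = (lam - 1) * (lam⁻¹ - 1) := by
    rw [Matrix.det_fin_two]
    simp [Matrix.sub_apply, Matrix.one_apply]
  rw [this]
  exact mul_ne_zero (sub_ne_zero.mpr hlam1) (sub_ne_zero.mpr hlaminv1)

lemma rot_conj_psi0 (t : ℝ) :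
    Rot (Real.pi/2) * psi0 lam T t * Rot (-(Real.pi/2)) = psi0' lam T t := by
  ext i j
  fin_cases i <;> fin_cases j <;>
    simp [Rot, psi0, psi0', Matrix.mul_apply, Fin.sum_univ_two]

end CZAux

open CZAux

/-- Parity of the Conley–Zehnder index: any index `μ` on paths in `SL(2,ℝ)` starting at `I`
with nondegenerate endpoint, satisfying homotopy invariance, Maslov compatibility
(`μ(LΦ) − μ(Φ)` is twice an integer depending only on the loop `L`), invertibility, and
normalization, is even on any path whose endpoint has two positive real eigenvalues
`λ ≠ 1` and `1/λ`. -/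
theorem cz_index_even_of_positively_hyperbolic
    (μ : (ℝ → Matrix (Fin 2) (Fin 2) ℝ) → ℝ → ℤ)
    -- homotopy invariance through nondegenerate paths
    (hinv : ∀ T : ℝ, 0 < T → ∀ Ψ₁ Ψ₂ : ℝ → Matrix (Fin 2) (Fin 2) ℝ,
      (∃ H : ℝ × ℝ → Matrix (Fin 2) (Fin 2) ℝ,
        ContinuousOn H (Set.Icc 0 1 ×ˢ Set.Icc 0 T) ∧
        (∀ s ∈ Set.Icc (0 : ℝ) 1, ∀ t ∈ Set.Icc (0 : ℝ) T, (H (s, t)).det = 1) ∧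
        (∀ t ∈ Set.Icc (0 : ℝ) T, H (0, t) = Ψ₁ t) ∧
        (∀ t ∈ Set.Icc (0 : ℝ) T, H (1, t) = Ψ₂ t) ∧
        (∀ s ∈ Set.Icc (0 : ℝ) 1, H (s, 0) = 1) ∧
        (∀ s ∈ Set.Icc (0 : ℝ) 1, ((H (s, T)) - 1).det ≠ 0)) →
      μ Ψ₁ T = μ Ψ₂ T)
    -- Maslov compatibility: for every closed loop `L`, `μ(LΦ) = μ(Φ) + 2·maslov(L)`
    (hmaslov : ∀ T : ℝ, 0 < T → ∀ L : ℝ → Matrix (Fin 2) (Fin 2) ℝ,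
      ContinuousOn L (Set.Icc 0 T) → L 0 = 1 → L T = 1 →
      (∀ t ∈ Set.Icc (0 : ℝ) T, (L t).det = 1) →
      ∃ m : ℤ, ∀ Φ : ℝ → Matrix (Fin 2) (Fin 2) ℝ,
        ContinuousOn Φ (Set.Icc 0 T) → Φ 0 = 1 →
        (∀ t ∈ Set.Icc (0 : ℝ) T, (Φ t).det = 1) → ((Φ T) - 1).det ≠ 0 →
        μ (fun t => L t * Φ t) T = μ Φ T + 2 * m)
    -- invertibility
    (hinvert : ∀ T : ℝ, 0 < T → ∀ Φ : ℝ → Matrix (Fin 2) (Fin 2) ℝ,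
      ContinuousOn Φ (Set.Icc 0 T) → Φ 0 = 1 →
      (∀ t ∈ Set.Icc (0 : ℝ) T, (Φ t).det = 1) → ((Φ T) - 1).det ≠ 0 →
      μ (fun t => (Φ t)⁻¹) T = - μ Φ T)
    -- normalization: the half-turn rotation path has index 1
    (hnorm : μ (fun t => !![Real.cos (Real.pi * t), -Real.sin (Real.pi * t);
        Real.sin (Real.pi * t), Real.cos (Real.pi * t)]) 1 = 1)
    -- a path with positively hyperbolic endpoint:
    (T : ℝ) (hT : 0 < T) (Φ : ℝ → Matrix (Fin 2) (Fin 2) ℝ)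
    (hcont : ContinuousOn Φ (Set.Icc 0 T)) (hstart : Φ 0 = 1)
    (hdet : ∀ t ∈ Set.Icc (0 : ℝ) T, (Φ t).det = 1)
    (lam : ℝ) (hlam : 0 < lam) (hlam1 : lam ≠ 1)
    (hv : ∃ v : Fin 2 → ℝ, v ≠ 0 ∧ (Φ T).mulVec v = lam • v)
    (hw : ∃ w : Fin 2 → ℝ, w ≠ 0 ∧ (Φ T).mulVec w = lam⁻¹ • w) :
    2 ∣ μ Φ T := by
  clear hnorm hw
  obtain ⟨v, hv0, hvA⟩ := hv
  have hTmem : T ∈ Set.Icc (0:ℝ) T := ⟨hT.le, le_refl T⟩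
  have hdetA : (Φ T).det = 1 := hdet T hTmem
  have hlamne : lam ≠ 0 := ne_of_gt hlam
  have hlaminv1 : lam⁻¹ ≠ 1 := by simpa [inv_eq_one] using hlam1
  -- the angle of the eigenvector v
  set z : ℂ := ⟨v 0, v 1⟩ with hzdef
  have hzne : z ≠ 0 := by
    intro h
    apply hv0
    funext i
    fin_cases i
    · simpa [hzdef] using congrArg Complex.re h
    · simpa [hzdef] using congrArg Complex.im h
  set θ := Complex.arg z with hθdef
  have hNpos : (0:ℝ) < ‖z‖ := norm_pos_iff.mpr hzne
  have hNne : ‖z‖ ≠ 0 := ne_of_gt hNpos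
  have hu : Real.cos θ = v 0 / ‖z‖ := by
    rw [hθdef, Complex.cos_arg hzne]
  have hw2 : Real.sin θ = v 1 / ‖z‖ := by
    rw [hθdef, Complex.sin_arg]
  -- eigenvalue equations
  have e0 : Φ T 0 0 * v 0 + Φ T 0 1 * v 1 = lam * v 0 := by
    have := congrFun hvA 0
    simpa [Matrix.mulVec, dotProduct, Fin.sum_univ_two] using this
  have e1 : Φ T 1 0 * v 0 + Φ T 1 1 * v 1 = lam * v 1 := by
    have := congrFun hvA 1
    simpa [Matrix.mulVec, dotProduct, Fin.sum_univ_two] using this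
  have E0 : Φ T 0 0 * Real.cos θ + Φ T 0 1 * Real.sin θ = lam * Real.cos θ := by
    rw [hu, hw2]
    field_simp
    linear_combination e0
  have E1 : Φ T 1 0 * Real.cos θ + Φ T 1 1 * Real.sin θ = lam * Real.sin θ := by
    rw [hu, hw2]
    field_simp
    linear_combination e1
  have pyth : Real.cos θ ^ 2 + Real.sin θ ^ 2 = 1 := by
    have := Real.sin_sq_add_cos_sq θ; linarith
  -- triangularize
  set B := Rot (-θ) * Φ T * Rot θ with hBdef
  have hB00 : B 0 0 = lam := by
    simp only [hBdef, Rot, Matrix.mul_apply, Fin.sum_univ_two, Real.cos_neg, Real.sin_neg]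
    simp
    linear_combination Real.cos θ * E0 + Real.sin θ * E1 + lam * pyth
  have hB10 : B 1 0 = 0 := by
    simp only [hBdef, Rot, Matrix.mul_apply, Fin.sum_univ_two, Real.cos_neg, Real.sin_neg]
    simp
    linear_combination (- Real.sin θ) * E0 + Real.cos θ * E1
  have hdetB : B.det = 1 := by
    rw [hBdef, Matrix.det_mul, Matrix.det_mul, Rot_det, Rot_det, hdetA]
    ring
  have hB11 : B 1 1 = lam⁻¹ := by
    have h := hdetB
    rw [Matrix.det_fin_two, hB00, hB10, mul_zero, sub_zero] at h
    field_simp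
    linarith [h]
  have hBeta : B = !![lam, B 0 1; 0, lam⁻¹] := by
    ext i j
    fin_cases i <;> fin_cases j <;> simp [hB00, hB10, hB11]
  have hA : Rot θ * B * Rot (-θ) = Φ T := by
    rw [hBdef]
    rw [show Rot θ * (Rot (-θ) * Φ T * Rot θ) * Rot (-θ)
        = (Rot θ * Rot (-θ)) * Φ T * (Rot θ * Rot (-θ)) by noncomm_ring]
    rw [Rot_mul_neg, Matrix.one_mul, Matrix.mul_one]
  -- the connecting path from Φ T to the diagonal matrix D
  set p : ℝ → Matrix (Fin 2) (Fin 2) ℝ :=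
    fun σ => Rot (θ*(1-σ)) * !![lam, (1-σ) * B 0 1; 0, lam⁻¹] * Rot (-(θ*(1-σ)))
    with hpdef
  have hp0 : p 0 = Φ T := by
    rw [hpdef]
    norm_num
    rw [← hBeta]
    exact hA
  have hp1 : p 1 = !![lam, 0; 0, lam⁻¹] := by
    rw [hpdef]
    norm_num [Rot_zero]
  have hpdet : ∀ σ : ℝ, (p σ).det = 1 := by
    intro σ
    rw [hpdef]
    simp only [Matrix.det_mul, Rot_det, Matrix.det_fin_two_of]
    field_simp
    ring
  have hpsub : ∀ σ : ℝ, (p σ - 1).det ≠ 0 := by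
    intro σ
    rw [hpdef]
    simp only []
    rw [conj_sub_one_det _ _ _ (Rot_mul_neg _)]
    have h2 : ((!![lam, (1-σ) * B 0 1; 0, lam⁻¹] : Matrix (Fin 2) (Fin 2) ℝ) - 1).det
        = (lam - 1) * (lam⁻¹ - 1) := by
      rw [Matrix.det_fin_two]
      simp [Matrix.sub_apply, Matrix.one_apply]
    rw [h2]
    exact mul_ne_zero (sub_ne_zero.mpr hlam1) (sub_ne_zero.mpr hlaminv1)
  have hlin : Continuous fun σ : ℝ => θ * (1 - σ) :=
    continuous_const.mul (continuous_const.sub continuous_id)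
  have hpcont : Continuous p := by
    rw [hpdef]
    apply Continuous.mul
    apply Continuous.mul
    · exact Rot_continuous.comp hlin
    · apply continuous_matrix
      intro i j
      fin_cases i <;> fin_cases j <;> simp <;>
        first
          | exact continuous_const
          | exact (continuous_const.sub continuous_id).mul continuous_const
    · exact Rot_continuous.comp hlin.neg
  -- inverse of the endpoint
  have hAunit : IsUnit (Φ T).det := by rw [hdetA]; exact isUnit_one
  have hAAi : Φ T * (Φ T)⁻¹ = 1 := Matrix.mul_nonsing_inv _ hAunit
  have hAiA : (Φ T)⁻¹ * Φ T = 1 := Matrix.nonsing_inv_mul _ hAunit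
  have hdetAi : ((Φ T)⁻¹).det = 1 := by
    rw [Matrix.det_nonsing_inv, hdetA]
    simp
  set c : ℝ → Matrix (Fin 2) (Fin 2) ℝ := fun σ => (Φ T)⁻¹ * p σ with hcdef
  have hc0 : c 0 = 1 := by rw [hcdef]; simp only []; rw [hp0]; exact hAiA
  have hccont : Continuous c := continuous_const.mul hpcont
  have hcdet : ∀ σ : ℝ, (c σ).det = 1 := by
    intro σ
    rw [hcdef]
    simp only [Matrix.det_mul, hdetAi, hpdet σ, one_mul]
  have hAc : ∀ σ : ℝ, Φ T * c σ = p σ := by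
    intro σ
    rw [hcdef]
    simp only []
    rw [← Matrix.mul_assoc, hAAi, Matrix.one_mul]
  -- the homotoped path Ψ
  set Ψ : ℝ → Matrix (Fin 2) (Fin 2) ℝ := fun t => Φ t * c (t/T) with hΨdef
  have hΨcont : ContinuousOn Ψ (Set.Icc 0 T) :=
    hcont.mul (hccont.comp (continuous_id.div_const T)).continuousOn
  have hΨ0 : Ψ 0 = 1 := by
    rw [hΨdef]
    simp only []
    rw [zero_div, hc0, hstart, Matrix.mul_one]
  have hΨT : Ψ T = !![lam, 0; 0, lam⁻¹] := by
    rw [hΨdef]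
    simp only []
    rw [div_self hT.ne', hAc 1, hp1]
  have hΨdet : ∀ t ∈ Set.Icc (0:ℝ) T, (Ψ t).det = 1 := by
    intro t ht
    rw [hΨdef]
    simp only [Matrix.det_mul]
    rw [hdet t ht, hcdet, one_mul]
  -- Step 1 : μ Φ T = μ Ψ T
  have step1 : μ Φ T = μ Ψ T := by
    apply hinv T hT
    refine ⟨fun q => Φ q.2 * c (q.1 * (q.2 / T)), ?_, ?_, ?_, ?_, ?_, ?_⟩
    · apply ContinuousOn.mul
      · exact hcont.comp continuous_snd.continuousOn (fun q hq => hq.2)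
      · exact (hccont.comp ((continuous_fst.mul
          (continuous_snd.div_const T)))).continuousOn
    · intro s _ t ht
      simp only [Matrix.det_mul]
      rw [hdet t ht, hcdet, one_mul]
    · intro t _
      beta_reduce
      simp only [zero_mul, hc0, Matrix.mul_one]
    · intro t _
      beta_reduce
      simp only [one_mul]
      rfl
    · intro s _
      beta_reduce
      simp only [zero_div, mul_zero, hc0, hstart, Matrix.mul_one]
    · intro s _
      beta_reduce
      rw [div_self hT.ne', mul_one, hAc s]
      exact hpsub s
  -- Step 2 : μ (psi0 lam T) T = 0
  have hψ0sub : ((psi0 lam T T) - 1).det ≠ 0 := by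
    rw [psi0_T hlam hT.ne']
    exact D_sub_det hlam1 hlaminv1
  have step2 : μ (psi0 lam T) T = 0 := by
    have htoInv : μ (psi0 lam T) T = μ (fun t => (psi0 lam T t)⁻¹) T := by
      apply hinv T hT
      refine ⟨fun q => Rot (q.1 * (Real.pi/2)) * psi0 lam T q.2
        * Rot (-(q.1 * (Real.pi/2))), ?_, ?_, ?_, ?_, ?_, ?_⟩
      · apply Continuous.continuousOn
        have hlin2 : Continuous fun q : ℝ × ℝ => q.1 * (Real.pi/2) :=
          continuous_fst.mul continuous_const
        apply Continuous.mul
        apply Continuous.mul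
        · exact Rot_continuous.comp hlin2
        · exact (psi0_cont hlam).comp continuous_snd
        · exact Rot_continuous.comp hlin2.neg
      · intro s _ t _
        simp only [Matrix.det_mul, Rot_det, psi0_det hlam]
        ring
      · intro t _
        beta_reduce
        norm_num [Rot_zero]
      · intro t _
        beta_reduce
        rw [one_mul, rot_conj_psi0, psi0_inv hlam]
      · intro s _
        beta_reduce
        rw [psi0_zero, Matrix.mul_one, Rot_mul_neg]
      · intro s _
        beta_reduce
        rw [conj_sub_one_det _ _ _ (Rot_mul_neg _)]
        exact hψ0sub
    have hinve : μ (fun t => (psi0 lam T t)⁻¹) T = - μ (psi0 lam T) T :=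
      hinvert T hT _ (psi0_cont hlam).continuousOn psi0_zero
        (fun t _ => psi0_det hlam t) hψ0sub
    omega
  -- Step 3 : the loop L = Ψ * psi0⁻¹
  obtain ⟨m, hm⟩ := hmaslov T hT (fun t => Ψ t * psi0' lam T t)
    (hΨcont.mul (psi0'_cont hlam).continuousOn)
    (by beta_reduce
        rw [hΨ0, psi0'_zero, Matrix.one_mul])
    (by beta_reduce
        rw [hΨT, psi0'_T hlam hT.ne']
        simp [Matrix.mul_fin_two, Matrix.one_fin_two, mul_inv_cancel₀ hlamne,
          inv_mul_cancel₀ hlamne])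
    (by intro t ht
        simp only [Matrix.det_mul]
        rw [hΨdet t ht, psi0'_det hlam, one_mul])
  have key := hm (psi0 lam T) (psi0_cont hlam).continuousOn psi0_zero
    (fun t _ => psi0_det hlam t) hψ0sub
  have hfun : (fun t => (Ψ t * psi0' lam T t) * psi0 lam T t) = Ψ := by
    funext t
    rw [Matrix.mul_assoc, psi0'_mul_psi0 hlam, Matrix.mul_one]
  rw [hfun, step2] at key
  rw [step1, key]
  exact ⟨m, by ring⟩
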